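/- Let q be a prime power, m ≥ 1, n ≥ 1, N = (q^m-q)/(q-1), and Q = F_q[x_1,...,x_n]/(x_1^{q^m},...,x_n^{q^m}). For 0 ≤ k' ≤ N, the polynomial a_{m,n,k'} := ∑ x_1^{i_1(q-1)} ··· x_n^{i_n(q-1)}, summed over all n-tuples (i_1,...,i_n) of nonnegative integers with i_1 + ... + i_n = (n-1)N + k' and each i_j ≤ N, is invariant under the action of GL_n(F_q) on Q. -/

import Mathlib

open MvPolynomial Finset

/-- The action of `g ∈ GL_n(F)` on `F[x_1,…,x_n]` by linear substitution of variables. -/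
noncomputable def glAct (F : Type) [Field F] (n : ℕ) (g : GL (Fin n) F) :
    MvPolynomial (Fin n) F →ₐ[F] MvPolynomial (Fin n) F :=
  MvPolynomial.aeval fun i => ∑ j, (g : Matrix (Fin n) (Fin n) F) i j • MvPolynomial.X j

/-- The ideal `(x_1^N, …, x_n^N)`. -/
noncomputable def frobIdeal (F : Type) [Field F] (n N : ℕ) :
    Ideal (MvPolynomial (Fin n) F) :=
  Ideal.span (Set.range fun i : Fin n => (MvPolynomial.X i : MvPolynomial (Fin n) F) ^ N)

/-- The element `a_{m,n,k'} = ∑ x_1^{i_1(q-1)} ⋯ x_n^{i_n(q-1)}`, summed over tuples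
with `i_1 + ⋯ + i_n = (n-1)N + k'` and each `i_j ≤ N`, where `N = (q^m-q)/(q-1)`. -/
noncomputable def aInv (F : Type) [Field F] (n q m k' : ℕ) : MvPolynomial (Fin n) F :=
  ∑ d ∈ (Fintype.piFinset fun _ : Fin n => Finset.range ((q ^ m - q) / (q - 1) + 1)) |>.filter
      (fun d => ∑ j, d j = (n - 1) * ((q ^ m - q) / (q - 1)) + k'),
    ∏ j, MvPolynomial.X j ^ (d j * (q - 1))

open scoped Classical


section Arith

lemma Ndvd {q m : ℕ} (hq : 2 ≤ q) (hm : 1 ≤ m) : (q - 1) ∣ (q ^ m - q) := by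
  have h1 : q - 1 ∣ q ^ m - 1 := by simpa using Nat.sub_dvd_pow_sub_pow q 1 m
  have h2 : q ≤ q ^ m := Nat.le_self_pow (by omega) q
  have := Nat.dvd_sub h1 (dvd_refl (q - 1))
  have he : q ^ m - 1 - (q - 1) = q ^ m - q := by omega
  rwa [he] at this

lemma Nmul {q m : ℕ} (hq : 2 ≤ q) (hm : 1 ≤ m) :
    (q ^ m - q) / (q - 1) * (q - 1) = q ^ m - q :=
  Nat.div_mul_cancel (Ndvd hq hm)

lemma Nmul' {q m : ℕ} (hq : 2 ≤ q) (hm : 1 ≤ m) :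
    ((q ^ m - q) / (q - 1) + 1) * (q - 1) = q ^ m - 1 := by
  have h2 : q ≤ q ^ m := Nat.le_self_pow (by omega) q
  have := Nmul (q := q) (m := m) hq hm
  rw [add_mul, one_mul, this]
  omega

end Arith

section OneVar

variable {F : Type} [Field F] [Fintype F]

local notation "Y" => (Polynomial.X : Polynomial F)

lemma S_mul_eq (q : ℕ) (hq : Fintype.card F = q) (m : ℕ) (hm : 1 ≤ m)
    (κ : ℕ) (hκ : κ ≤ (q ^ m - q) / (q - 1)) :
    (∑ i ∈ Icc κ ((q ^ m - q) / (q - 1)), ((1 : Polynomial F) + Y) ^ (i * (q - 1))) *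
        (Y ^ q - Y) = 1 + Y ^ (q ^ m) - (1 + Y) ^ (κ * (q - 1) + 1) := by
  have hq2 : 2 ≤ q := by rw [← hq]; exact Fintype.one_lt_card
  set N := (q ^ m - q) / (q - 1) with hN
  obtain ⟨s, hp, hcard⟩ := FiniteField.card F (ringChar F)
  haveI : Fact (Nat.Prime (ringChar F)) := ⟨hp⟩
  have hqp : q = ringChar F ^ (s : ℕ) := by rw [← hq]; exact hcard
  have frob : ∀ e : ℕ, ((1 : Polynomial F) + Y) ^ (q ^ e) = 1 + Y ^ (q ^ e) := by
    intro e
    have h : q ^ e = ringChar F ^ ((s : ℕ) * e) := by rw [hqp, ← pow_mul]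
    rw [h, add_pow_char_pow, one_pow]
  have frob1 : ((1 : Polynomial F) + Y) ^ q = 1 + Y ^ q := by simpa using frob 1
  have key : (∑ i ∈ Icc κ N, ((1 : Polynomial F) + Y) ^ (i * (q - 1))) *
      (((1 + Y) ^ (q - 1)) - 1) = (1 + Y) ^ ((N + 1) * (q - 1)) - (1 + Y) ^ (κ * (q - 1)) := by
    have h := geom_sum_Ico_mul (((1 : Polynomial F) + Y) ^ (q - 1)) (Nat.le_succ_of_le hκ)
    rw [← Finset.Ico_add_one_right_eq_Icc]
    simpa [← pow_mul, mul_comm] using h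
  have step : (∑ i ∈ Icc κ N, ((1 : Polynomial F) + Y) ^ (i * (q - 1))) *
      ((((1 + Y) ^ (q - 1)) - 1) * (1 + Y)) =
      ((1 + Y) ^ ((N + 1) * (q - 1)) - (1 + Y) ^ (κ * (q - 1))) * (1 + Y) := by
    rw [← mul_assoc, key]
  have e1 : (((1 : Polynomial F) + Y) ^ (q - 1) - 1) * (1 + Y) = Y ^ q - Y := by
    have h : ((1 : Polynomial F) + Y) ^ (q - 1) * (1 + Y) = (1 + Y) ^ q := by
      rw [← pow_succ]
      congr 1
      omega
    rw [sub_mul, one_mul, h, frob1]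
    ring
  have e2 : ((1 : Polynomial F) + Y) ^ ((N + 1) * (q - 1)) * (1 + Y) = 1 + Y ^ (q ^ m) := by
    have h1 : (N + 1) * (q - 1) = q ^ m - 1 := Nmul' hq2 hm
    have h2 : q ^ m - 1 + 1 = q ^ m := by
      have : 1 ≤ q ^ m := Nat.one_le_pow _ _ (by omega)
      omega
    rw [h1, ← pow_succ, h2, frob m]
  have e3 : ((1 : Polynomial F) + Y) ^ (κ * (q - 1)) * (1 + Y) = (1 + Y) ^ (κ * (q - 1) + 1) := by
    rw [← pow_succ]
  rw [e1] at step
  rw [step, sub_mul, e2, e3]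

lemma T_mul_eq (q : ℕ) (hq : Fintype.card F = q) (m : ℕ) (hm : 1 ≤ m)
    (κ : ℕ) (hκ : κ ≤ (q ^ m - q) / (q - 1)) :
    (∑ i ∈ Icc κ ((q ^ m - q) / (q - 1)), (Y : Polynomial F) ^ (i * (q - 1))) *
        (Y ^ q - Y) = Y ^ (q ^ m) - Y ^ (κ * (q - 1) + 1) := by
  have hq2 : 2 ≤ q := by rw [← hq]; exact Fintype.one_lt_card
  set N := (q ^ m - q) / (q - 1) with hN
  have key : (∑ i ∈ Icc κ N, (Y : Polynomial F) ^ (i * (q - 1))) *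
      ((Y ^ (q - 1)) - 1) = Y ^ ((N + 1) * (q - 1)) - Y ^ (κ * (q - 1)) := by
    have h := geom_sum_Ico_mul ((Y : Polynomial F) ^ (q - 1)) (Nat.le_succ_of_le hκ)
    rw [← Finset.Ico_add_one_right_eq_Icc]
    simpa [← pow_mul, mul_comm] using h
  have step : (∑ i ∈ Icc κ N, (Y : Polynomial F) ^ (i * (q - 1))) *
      (((Y ^ (q - 1)) - 1) * Y) = (Y ^ ((N + 1) * (q - 1)) - Y ^ (κ * (q - 1))) * Y := by
    rw [← mul_assoc, key]
  have e1 : ((Y : Polynomial F) ^ (q - 1) - 1) * Y = Y ^ q - Y := by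
    have h : (Y : Polynomial F) ^ (q - 1) * Y = Y ^ q := by
      rw [← pow_succ]; congr 1; omega
    rw [sub_mul, one_mul, h]
  have e2 : (Y : Polynomial F) ^ ((N + 1) * (q - 1)) * Y = Y ^ (q ^ m) := by
    have h1 : (N + 1) * (q - 1) = q ^ m - 1 := Nmul' hq2 hm
    have h2 : q ^ m - 1 + 1 = q ^ m := by
      have : 1 ≤ q ^ m := Nat.one_le_pow _ _ (by omega)
      omega
    rw [h1, ← pow_succ, h2]
  have e3 : (Y : Polynomial F) ^ (κ * (q - 1)) * Y = Y ^ (κ * (q - 1) + 1) := by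
    rw [← pow_succ]
  rw [e1] at step
  rw [step, sub_mul, e2, e3]

/-- The core binomial-sum identity mod `p`. -/
lemma sum_choose_eq (q : ℕ) (hq : Fintype.card F = q) (m : ℕ) (hm : 1 ≤ m)
    (κ r : ℕ) (hκ : κ ≤ (q ^ m - q) / (q - 1)) (hr : r < q ^ m)
    (hwin : κ * (q - 1) < r + q) :
    (∑ i ∈ Icc κ ((q ^ m - q) / (q - 1)), ((i * (q - 1)).choose r : F)) =
      if ∃ i ∈ Icc κ ((q ^ m - q) / (q - 1)), i * (q - 1) = r then 1 else 0 := by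
  classical
  have hq2 : 2 ≤ q := by rw [← hq]; exact Fintype.one_lt_card
  set N := (q ^ m - q) / (q - 1) with hN
  set S : Polynomial F := ∑ i ∈ Icc κ N, ((1 : Polynomial F) + Y) ^ (i * (q - 1)) with hS
  set T : Polynomial F := ∑ i ∈ Icc κ N, (Y : Polynomial F) ^ (i * (q - 1)) with hT
  -- coefficient computations
  have hcS : S.coeff r = ∑ i ∈ Icc κ N, ((i * (q - 1)).choose r : F) := by
    rw [hS, Polynomial.finset_sum_coeff]
    exact Finset.sum_congr rfl fun i _ => Polynomial.coeff_one_add_X_pow F _ r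
  have hcT : T.coeff r =
      if ∃ i ∈ Icc κ N, i * (q - 1) = r then (1 : F) else 0 := by
    rw [hT, Polynomial.finset_sum_coeff]
    by_cases hex : ∃ i ∈ Icc κ N, i * (q - 1) = r
    · obtain ⟨i₀, hi₀, hi₀r⟩ := hex
      rw [if_pos ⟨i₀, hi₀, hi₀r⟩]
      rw [Finset.sum_eq_single_of_mem i₀ hi₀]
      · rw [Polynomial.coeff_X_pow, if_pos hi₀r.symm]
      · intro j hj hji
        rw [Polynomial.coeff_X_pow, if_neg]
        intro hcon
        exact hji (Nat.eq_of_mul_eq_mul_right (show 0 < q - 1 by omega) (hcon.symm.trans hi₀r.symm))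
    · rw [if_neg hex]
      apply Finset.sum_eq_zero
      intro j hj
      rw [Polynomial.coeff_X_pow, if_neg]
      exact fun hcon => hex ⟨j, hj, hcon.symm⟩
  -- the difference has small degree
  have hmul : (S - T) * (Y ^ q - Y) =
      1 + Y ^ (κ * (q - 1) + 1) - (1 + Y) ^ (κ * (q - 1) + 1) := by
    rw [sub_mul, S_mul_eq q hq m hm κ hκ, T_mul_eq q hq m hm κ hκ]
    ring
  have hdegR : (1 + Y ^ (κ * (q - 1) + 1) - ((1 : Polynomial F) + Y) ^ (κ * (q - 1) + 1)).degree
      ≤ (κ * (q - 1) : ℕ) := by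
    rw [Polynomial.degree_le_iff_coeff_zero]
    intro b hb
    rw [Nat.cast_lt] at hb
    simp only [Polynomial.coeff_sub, Polynomial.coeff_add, Polynomial.coeff_one,
      Polynomial.coeff_X_pow, Polynomial.coeff_one_add_X_pow]
    rcases Nat.lt_or_ge (κ * (q - 1) + 1) b with h | h
    · rw [Nat.choose_eq_zero_of_lt h, if_neg (by omega), if_neg (by omega)]
      simp
    · have hbe : b = κ * (q - 1) + 1 := by omega
      rw [hbe, if_neg (by omega), if_pos rfl, Nat.choose_self]
      simp
  have hco : (S - T).coeff r = 0 := by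
    by_cases h0 : S - T = 0
    · rw [h0, Polynomial.coeff_zero]
    · apply Polynomial.coeff_eq_zero_of_degree_lt
      have hYq : (Y ^ q - (Y : Polynomial F)).degree = (q : ℕ) := by
        rw [Polynomial.degree_sub_eq_left_of_degree_lt]
        · exact Polynomial.degree_X_pow q
        · rw [Polynomial.degree_X_pow, Polynomial.degree_X]
          exact_mod_cast by omega
      have hYq0 : (Y ^ q - (Y : Polynomial F)) ≠ 0 := by
        intro hcon
        rw [hcon, Polynomial.degree_zero] at hYq
        exact (by simp : (⊥ : WithBot ℕ) ≠ (q : ℕ)) hYq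
      have hdm : (S - T).degree + (q : ℕ) ≤ (κ * (q - 1) : ℕ) := by
        rw [← hYq, ← Polynomial.degree_mul, hmul]
        exact hdegR
      have : (S - T).degree + (q : ℕ) < ((r : WithBot ℕ)) + (q : ℕ) := by
        apply lt_of_le_of_lt hdm
        exact_mod_cast hwin
      exact lt_of_add_lt_add_right this
  have hST : S.coeff r = T.coeff r :=
    sub_eq_zero.mp (by rw [← Polynomial.coeff_sub]; exact hco)
  rw [← hcS, hST, hcT]
  by_cases hex : ∃ i ∈ Icc κ N, i * (q - 1) = r <;> simp [hex]
lemma sum_choose_c (q : ℕ) (hq : Fintype.card F = q) (m : ℕ) (hm : 1 ≤ m)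
    (c : F) (hc : c ≠ 0)
    (κ r : ℕ) (hκ : κ ≤ (q ^ m - q) / (q - 1)) (hr : r < q ^ m)
    (hwin : κ * (q - 1) < r + q) :
    (∑ i ∈ Icc κ ((q ^ m - q) / (q - 1)), c ^ (i * (q - 1) - r) * ((i * (q - 1)).choose r : F)) =
      if ∃ i ∈ Icc κ ((q ^ m - q) / (q - 1)), i * (q - 1) = r then 1 else 0 := by
  classical
  set N := (q ^ m - q) / (q - 1) with hN
  have h1 : ∀ i : ℕ, c ^ (i * (q - 1)) = 1 := by
    intro i
    rw [mul_comm, pow_mul, ← hq, FiniteField.pow_card_sub_one_eq_one c hc, one_pow]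
  apply mul_right_cancel₀ (pow_ne_zero r hc)
  rw [Finset.sum_mul]
  have hL : (∑ i ∈ Icc κ N, c ^ (i * (q - 1) - r) * ((i * (q - 1)).choose r : F) * c ^ r) =
      ∑ i ∈ Icc κ N, ((i * (q - 1)).choose r : F) := by
    apply Finset.sum_congr rfl
    intro i _
    by_cases h : r ≤ i * (q - 1)
    · rw [mul_right_comm, mul_comm (c ^ (i * (q - 1) - r)) (c ^ r), ← pow_add,
        Nat.add_sub_cancel' h, h1 i, one_mul]
    · rw [Nat.choose_eq_zero_of_lt (by omega)]
      simp
  rw [hL, sum_choose_eq q hq m hm κ r hκ hr hwin]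
  by_cases hex : ∃ i ∈ Icc κ N, i * (q - 1) = r
  · obtain ⟨i₀, hi₀, hir⟩ := hex
    simp only [if_pos (⟨i₀, hi₀, hir⟩ : ∃ i ∈ Icc κ N, i * (q - 1) = r), one_mul]
    rw [← hir, h1 i₀]
    exact if_pos ⟨i₀, hi₀, rfl⟩
  · rw [if_neg hex, zero_mul]

end OneVar

section TwoVar

open MvPolynomial

variable {F : Type} [Field F] [Fintype F]

lemma pow_mem_frobIdeal {n A : ℕ} (j : Fin n) :
    (X j : MvPolynomial (Fin n) F) ^ A ∈ frobIdeal F n A :=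
  Ideal.subset_span ⟨j, rfl⟩

noncomputable def phi {n : ℕ} (q : ℕ) (s t : Fin n) (c : F) (D i r : ℕ) :
    MvPolynomial (Fin n) F :=
  C (c ^ (i * (q - 1) - r) * ((i * (q - 1)).choose r : F)) * (X s ^ r * X t ^ (D - r))

lemma key2 (q : ℕ) (hq : Fintype.card F = q) (m : ℕ) (hm : 1 ≤ m)
    {n : ℕ} (s t : Fin n) (hst : s ≠ t) (c : F) (κ : ℕ)
    (hκ : κ ≤ (q ^ m - q) / (q - 1)) :
    (∑ i ∈ Icc κ ((q ^ m - q) / (q - 1)),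
      ((X s + C c * X t) ^ (i * (q - 1)) *
          (X t : MvPolynomial (Fin n) F) ^ (((q ^ m - q) / (q - 1) + κ - i) * (q - 1))
        - X s ^ (i * (q - 1)) * X t ^ (((q ^ m - q) / (q - 1) + κ - i) * (q - 1))))
      ∈ frobIdeal F n (q ^ m) := by
  classical
  have hq2 : 2 ≤ q := by rw [← hq]; exact Fintype.one_lt_card
  by_cases hc : c = 0
  · subst hc
    simp only [map_zero, zero_mul, add_zero, sub_self, Finset.sum_const_zero]
    exact Ideal.zero_mem _
  set N := (q ^ m - q) / (q - 1) with hN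
  set D := (N + κ) * (q - 1) with hD
  have hNq : N * (q - 1) = q ^ m - q := Nmul hq2 hm
  have hqm : q ≤ q ^ m := Nat.le_self_pow (by omega) q
  have hDalt : D = q ^ m - q + κ * (q - 1) := by rw [hD, add_mul, hNq]
  have hED : ∀ i ∈ Icc κ N, i * (q - 1) + (N + κ - i) * (q - 1) = D := by
    intro i hi
    rw [mem_Icc] at hi
    rw [hD, ← add_mul]
    congr 1
    omega
  have hElt : ∀ i ∈ Icc κ N, i * (q - 1) ≤ q ^ m - q := by
    intro i hi
    rw [mem_Icc] at hi
    rw [← hNq]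
    exact Nat.mul_le_mul_right _ hi.2
  have claim1 : ∀ i ∈ Icc κ N,
      (X s + C c * X t) ^ (i * (q - 1)) *
        (X t : MvPolynomial (Fin n) F) ^ ((N + κ - i) * (q - 1)) =
      ∑ r ∈ range (q ^ m), phi q s t c D i r := by
    intro i hi
    rw [add_pow, Finset.sum_mul]
    have step1 : ∀ r ∈ range (i * (q - 1) + 1),
        X s ^ r * (C c * X t) ^ (i * (q - 1) - r) *
            (((i * (q - 1)).choose r : ℕ) : MvPolynomial (Fin n) F) *
            X t ^ ((N + κ - i) * (q - 1)) = phi q s t c D i r := by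
      intro r hr
      rw [mem_range] at hr
      have hr' : r ≤ i * (q - 1) := by omega
      have hexp : (i * (q - 1) - r) + (N + κ - i) * (q - 1) = D - r := by
        have := hED i hi
        omega
      have hXt : (X t : MvPolynomial (Fin n) F) ^ (i * (q - 1) - r) *
          X t ^ ((N + κ - i) * (q - 1)) = X t ^ (D - r) := by
        rw [← pow_add, hexp]
      rw [phi, mul_pow, ← C_pow]
      rw [show (((i * (q - 1)).choose r : ℕ) : MvPolynomial (Fin n) F)
          = C (((i * (q - 1)).choose r : ℕ) : F) by
        rw [MvPolynomial.C_eq_coe_nat]]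
      rw [← hXt, C_mul]
      ring
    rw [Finset.sum_congr rfl step1]
    apply Finset.sum_subset
    · apply Finset.range_subset_range.mpr
      have := hElt i hi
      omega
    · intro r hr hrn
      rw [mem_range] at hr hrn
      rw [phi, Nat.choose_eq_zero_of_lt (by omega)]
      simp
  -- rewrite the sum
  rw [Finset.sum_sub_distrib, Finset.sum_congr rfl claim1, Finset.sum_comm,
    ← Finset.sum_filter_add_sum_filter_not (range (q ^ m)) (fun r => r + q ^ m ≤ D)]
  have hhigh : (∑ r ∈ (range (q ^ m)).filter (fun r => ¬(r + q ^ m ≤ D)),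
      ∑ i ∈ Icc κ N, phi q s t c D i r) =
      ∑ i ∈ Icc κ N, (X s : MvPolynomial (Fin n) F) ^ (i * (q - 1)) *
        X t ^ ((N + κ - i) * (q - 1)) := by
    have inner : ∀ r ∈ (range (q ^ m)).filter (fun r => ¬(r + q ^ m ≤ D)),
        (∑ i ∈ Icc κ N, phi q s t c D i r) =
        if ∃ i ∈ Icc κ N, i * (q - 1) = r then
          (X s : MvPolynomial (Fin n) F) ^ r * X t ^ (D - r) else 0 := by
      intro r hr
      rw [mem_filter, mem_range] at hr
      have hwin : κ * (q - 1) < r + q := by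
        have h2 := hr.2
        omega
      simp only [phi]
      rw [← Finset.sum_mul, ← map_sum]
      rw [sum_choose_c q hq m hm c hc κ r hκ hr.1 hwin]
      split
      · rw [map_one, one_mul]
      · rw [map_zero, zero_mul]
    rw [Finset.sum_congr rfl inner, ← Finset.sum_filter]
    have hset : ((range (q ^ m)).filter (fun r => ¬(r + q ^ m ≤ D))).filter
        (fun r => ∃ i ∈ Icc κ N, i * (q - 1) = r) =
        (Icc κ N).image (fun i => i * (q - 1)) := by
      ext r
      simp only [mem_filter, mem_range, mem_image]
      constructor
      · rintro ⟨⟨_, _⟩, i, hi, hir⟩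
        exact ⟨i, hi, hir⟩
      · rintro ⟨i, hi, hir⟩
        have h1 := hElt i hi
        have h2 : κ * (q - 1) ≤ i * (q - 1) := by
          rw [mem_Icc] at hi
          exact Nat.mul_le_mul_right _ hi.1
        refine ⟨⟨?_, ?_⟩, ⟨i, hi, hir⟩⟩
        · omega
        · subst hir
          rw [hDalt]
          omega
    rw [hset, Finset.sum_image (by
      intro a _ b _ hab
      exact Nat.eq_of_mul_eq_mul_right (show 0 < q - 1 by omega) hab)]
    apply Finset.sum_congr rfl
    intro i hi
    have h3 := hED i hi
    have h4 : D - i * (q - 1) = (N + κ - i) * (q - 1) := by omega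
    rw [h4]
  rw [hhigh, add_sub_cancel_right]
  apply Ideal.sum_mem
  intro r hr
  rw [mem_filter, mem_range] at hr
  apply Ideal.sum_mem
  intro i hi
  have hXt : (X t : MvPolynomial (Fin n) F) ^ (D - r) =
      X t ^ (D - r - q ^ m) * X t ^ (q ^ m) := by
    rw [← pow_add]
    congr 1
    have := hr.2
    omega
  rw [phi, hXt, ← mul_assoc, ← mul_assoc]
  exact Ideal.mul_mem_left _ _ (pow_mem_frobIdeal t)

end TwoVar

section Action

open MvPolynomial

variable {F : Type} [Field F] [Fintype F] {n : ℕ}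

noncomputable def actM (M : Matrix (Fin n) (Fin n) F) :
    MvPolynomial (Fin n) F →ₐ[F] MvPolynomial (Fin n) F :=
  aeval fun i => ∑ j, M i j • X j

lemma actM_X (M : Matrix (Fin n) (Fin n) F) (i : Fin n) :
    actM M (X i) = ∑ j, M i j • X j :=
  aeval_X _ i

lemma actM_comp (M M' : Matrix (Fin n) (Fin n) F) (f : MvPolynomial (Fin n) F) :
    actM M (actM M' f) = actM (M' * M) f := by
  have h : (actM M).comp (actM M') = actM (M' * M) := by
    apply MvPolynomial.algHom_ext
    intro i
    rw [AlgHom.comp_apply, actM_X, actM_X, map_sum]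
    have h1 : ∀ j, actM M (M' i j • X j) = M' i j • ∑ k, M j k • X k := by
      intro j
      rw [map_smul, actM_X]
    rw [Finset.sum_congr rfl fun j _ => h1 j]
    simp only [Finset.smul_sum, smul_smul]
    rw [Finset.sum_comm]
    apply Finset.sum_congr rfl
    intro k _
    rw [Matrix.mul_apply, ← Finset.sum_smul]
  calc actM M (actM M' f) = ((actM M).comp (actM M')) f := rfl
    _ = actM (M' * M) f := by rw [h]

lemma actM_mem_frobIdeal (q : ℕ) (hq : Fintype.card F = q) (m : ℕ)
    (M : Matrix (Fin n) (Fin n) F) {f : MvPolynomial (Fin n) F}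
    (hf : f ∈ frobIdeal F n (q ^ m)) : actM M f ∈ frobIdeal F n (q ^ m) := by
  obtain ⟨s', hp, hcard⟩ := FiniteField.card F (ringChar F)
  haveI : Fact (Nat.Prime (ringChar F)) := ⟨hp⟩
  have hqp : q ^ m = ringChar F ^ ((s' : ℕ) * m) := by rw [← hq, hcard, ← pow_mul]
  have hle : frobIdeal F n (q ^ m) ≤
      Ideal.comap (actM M : MvPolynomial (Fin n) F →+* MvPolynomial (Fin n) F)
        (frobIdeal F n (q ^ m)) := by
    rw [frobIdeal, Ideal.span_le]
    rintro _ ⟨j, rfl⟩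
    rw [SetLike.mem_coe, Ideal.mem_comap]
    have : (actM M : MvPolynomial (Fin n) F →+* MvPolynomial (Fin n) F) ((X j) ^ q ^ m)
        = (∑ k, M j k • X k) ^ q ^ m := by
      rw [map_pow]
      exact congrArg (· ^ q ^ m) (actM_X M j)
    rw [this, hqp, sum_pow_char_pow]
    apply Ideal.sum_mem
    intro k _
    rw [smul_pow, smul_eq_C_mul]
    apply Ideal.mul_mem_left
    rw [← hqp]
    exact pow_mem_frobIdeal k
  exact hle hf

lemma actM_diag (q : ℕ) (hq : Fintype.card F = q) (m k' : ℕ)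
    (d : Fin n → F) (hd : ∀ i, d i ≠ 0) :
    actM (Matrix.diagonal d) (aInv F n q m k') = aInv F n q m k' := by
  have hX : ∀ i, actM (Matrix.diagonal d) (X i) = d i • X i := by
    intro i
    rw [actM_X]
    rw [Finset.sum_eq_single i]
    · rw [Matrix.diagonal_apply_eq]
    · intro j _ hj
      rw [Matrix.diagonal_apply_ne d (Ne.symm hj), zero_smul]
    · intro h
      exact absurd (Finset.mem_univ i) h
  rw [aInv, map_sum]
  apply Finset.sum_congr rfl
  intro dd _
  rw [map_prod]
  apply Finset.prod_congr rfl
  intro j _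
  rw [map_pow, hX j, smul_pow]
  have hscal : d j ^ (dd j * (q - 1)) = 1 := by
    rw [mul_comm, pow_mul, ← hq, FiniteField.pow_card_sub_one_eq_one (d j) (hd j), one_pow]
  rw [hscal, one_smul]

lemma actM_transvection_X (s t : Fin n) (hst : s ≠ t) (c : F) (i : Fin n) :
    actM (Matrix.transvection s t c) (X i) =
      if i = s then X s + C c * X t else X i := by
  rw [actM_X]
  by_cases his : i = s
  · rw [if_pos his, his]
    have hterm : ∀ j : Fin n, Matrix.transvection s t c s j • (X j : MvPolynomial (Fin n) F) =
        (if s = j then X j else 0) + (if t = j then C c * X j else 0) := by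
      intro j
      rw [Matrix.transvection, Matrix.add_apply, Matrix.one_apply, add_smul]
      congr 1
      · split <;> simp [*]
      · by_cases hj : j = t
        · subst hj
          rw [Matrix.single_apply_same, if_pos rfl, smul_eq_C_mul]
        · rw [Matrix.single_apply_of_ne, if_neg (fun h => hj h.symm), zero_smul]
          tauto
    rw [Finset.sum_congr rfl fun j _ => hterm j, Finset.sum_add_distrib,
      Finset.sum_ite_eq, Finset.sum_ite_eq, if_pos (Finset.mem_univ s),
      if_pos (Finset.mem_univ t)]
  · rw [if_neg his]
    rw [Finset.sum_eq_single i]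
    · rw [Matrix.transvection, Matrix.add_apply, Matrix.one_apply, if_pos rfl,
        Matrix.single_apply_of_ne, add_zero, one_smul]
      tauto
    · intro j _ hj
      rw [Matrix.transvection, Matrix.add_apply, Matrix.one_apply, if_neg (fun h => hj h.symm),
        Matrix.single_apply_of_ne, add_zero, zero_smul]
      tauto
    · intro h
      exact absurd (Finset.mem_univ i) h

end Action

section Main

open MvPolynomial

variable {F : Type} [Field F] [Fintype F] {n : ℕ}

private lemma sum_split3 {β : Type} [AddCommMonoid β] (s t : Fin n) (hst : s ≠ t)
    (f : Fin n → β) :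
    ∑ j, f j = f s + f t + ∑ j ∈ (Finset.univ.erase s).erase t, f j := by
  have ht : t ∈ Finset.univ.erase s := Finset.mem_erase.mpr ⟨hst.symm, Finset.mem_univ t⟩
  rw [← Finset.add_sum_erase _ f (Finset.mem_univ s), ← Finset.add_sum_erase _ f ht, ← add_assoc]

private lemma prod_split3 {β : Type} [CommMonoid β] (s t : Fin n) (hst : s ≠ t)
    (f : Fin n → β) :
    ∏ j, f j = f s * f t * ∏ j ∈ (Finset.univ.erase s).erase t, f j := by
  have ht : t ∈ Finset.univ.erase s := Finset.mem_erase.mpr ⟨hst.symm, Finset.mem_univ t⟩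
  rw [← Finset.mul_prod_erase _ f (Finset.mem_univ s), ← Finset.mul_prod_erase _ f ht,
    ← mul_assoc]

lemma transvec_aInv (q : ℕ) (hq : Fintype.card F = q) (m : ℕ) (hm : 1 ≤ m)
    (k' : ℕ) (s t : Fin n) (hst : s ≠ t) (c : F) :
    actM (Matrix.transvection s t c) (aInv F n q m k') - aInv F n q m k'
      ∈ frobIdeal F n (q ^ m) := by
  classical
  have hq2 : 2 ≤ q := by rw [← hq]; exact Fintype.one_lt_card
  have h2n : 2 ≤ n := by
    have h1 : 1 < Fintype.card (Fin n) := Fintype.one_lt_card_iff_nontrivial.mpr ⟨⟨s, t, hst⟩⟩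
    rwa [Fintype.card_fin] at h1
  unfold aInv
  set N := (q ^ m - q) / (q - 1) with hN
  set Stot : ℕ := (n - 1) * N + k' with hStot
  set S : Finset (Fin n → ℕ) :=
    (Fintype.piFinset fun _ : Fin n => Finset.range (N + 1)) |>.filter
      (fun d => ∑ j, d j = Stot) with hSdef
  set R : Finset (Fin n) := (Finset.univ.erase s).erase t with hR
  have hRmem : ∀ j ∈ R, j ≠ t ∧ j ≠ s := by
    intro j hj
    rw [hR, Finset.mem_erase, Finset.mem_erase] at hj
    exact ⟨hj.1, hj.2.1⟩
  have hRcard : R.card = n - 2 := by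
    rw [hR, Finset.card_erase_of_mem (Finset.mem_erase.mpr ⟨hst.symm, Finset.mem_univ t⟩),
      Finset.card_erase_of_mem (Finset.mem_univ s), Finset.card_univ, Fintype.card_fin]
    omega
  -- action on monomials
  have hact : ∀ d : Fin n → ℕ,
      actM (Matrix.transvection s t c) (∏ j, (X j : MvPolynomial (Fin n) F) ^ (d j * (q - 1)))
      = ∏ j, (if j = s then X s + C c * X t else X j) ^ (d j * (q - 1)) := by
    intro d
    rw [map_prod]
    exact Finset.prod_congr rfl fun j _ => by rw [map_pow, actM_transvection_X s t hst c j]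
  rw [map_sum, ← Finset.sum_sub_distrib]
  set π : (Fin n → ℕ) → (Fin n → ℕ) :=
    fun d => Function.update (Function.update d s 0) t 0 with hπ
  rw [← Finset.sum_fiberwise_of_maps_to (g := π) (t := S.image π)
    (fun d hd => Finset.mem_image_of_mem π hd)]
  apply Ideal.sum_mem
  intro e he
  rw [Finset.mem_image] at he
  obtain ⟨d₀, hd₀S, hπd₀⟩ := he
  have hd₀S' := hd₀S
  rw [hSdef, Finset.mem_filter, Fintype.mem_piFinset] at hd₀S'
  have hd₀rng : ∀ j, d₀ j ≤ N := fun j => by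
    have := hd₀S'.1 j
    rw [Finset.mem_range] at this
    omega
  have hes : e s = 0 := by
    rw [← hπd₀, hπ]
    simp only []
    rw [Function.update_of_ne hst, Function.update_self]
  have het : e t = 0 := by
    rw [← hπd₀, hπ]
    simp only []
    rw [Function.update_self]
  have hej : ∀ j, j ≠ s → j ≠ t → e j = d₀ j := by
    intro j hjs hjt
    rw [← hπd₀, hπ]
    simp only []
    rw [Function.update_of_ne hjt, Function.update_of_ne hjs]
  have heN : ∀ j, e j ≤ N := by
    intro j
    by_cases hjs : j = s
    · rw [hjs, hes]; exact Nat.zero_le N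
    by_cases hjt : j = t
    · rw [hjt, het]; exact Nat.zero_le N
    rw [hej j hjs hjt]; exact hd₀rng j
  have heR : ∀ j ∈ R, e j = d₀ j := fun j hj =>
    hej j (hRmem j hj).2 (hRmem j hj).1
  have hRbound : ∑ j ∈ R, e j ≤ (n - 2) * N := by
    calc ∑ j ∈ R, e j ≤ ∑ j ∈ R, N := Finset.sum_le_sum fun j _ => heN j
    _ = (n - 2) * N := by rw [Finset.sum_const, hRcard, smul_eq_mul]
  have hd₀sum : d₀ s + d₀ t + ∑ j ∈ R, d₀ j = Stot := by
    rw [← sum_split3 s t hst d₀]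
    exact hd₀S'.2
  have heRd₀ : ∑ j ∈ R, e j = ∑ j ∈ R, d₀ j := Finset.sum_congr rfl heR
  set M' : ℕ := d₀ s + d₀ t with hM'
  have hStotexp : Stot = (n - 2) * N + N + k' := by
    rw [hStot]
    have : n - 1 = (n - 2) + 1 := by omega
    rw [this, add_mul, one_mul]
  have hM'ge : N + k' ≤ M' := by omega
  have hM'le : M' ≤ 2 * N := by
    have h1 := hd₀rng s
    have h2 := hd₀rng t
    omega
  set κ : ℕ := M' - N with hκdef
  have hκN : κ ≤ N := by omega
  have hNκ : N + κ = M' := by omega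
  set upd : ℕ → (Fin n → ℕ) :=
    fun i => Function.update (Function.update e s i) t (N + κ - i) with hupd
  have hupds : ∀ i, upd i s = i := by
    intro i
    rw [hupd]
    simp only []
    rw [Function.update_of_ne hst, Function.update_self]
  have hupdt : ∀ i, upd i t = N + κ - i := by
    intro i
    rw [hupd]
    simp only []
    rw [Function.update_self]
  have hupdj : ∀ i j, j ≠ s → j ≠ t → upd i j = e j := by
    intro i j hjs hjt
    rw [hupd]
    simp only []
    rw [Function.update_of_ne hjt, Function.update_of_ne hjs]
  have hfiber : S.filter (fun d => π d = e) = (Finset.Icc κ N).image upd := by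
    ext d
    rw [Finset.mem_filter, Finset.mem_image]
    constructor
    · rintro ⟨hdS, hdπ⟩
      have hdS' := hdS
      rw [hSdef, Finset.mem_filter, Fintype.mem_piFinset] at hdS'
      have hdrng : ∀ j, d j ≤ N := fun j => by
        have := hdS'.1 j
        rw [Finset.mem_range] at this
        omega
      have hdj : ∀ j, j ≠ s → j ≠ t → d j = e j := by
        intro j hjs hjt
        rw [← hdπ, hπ]
        simp only []
        rw [Function.update_of_ne hjt, Function.update_of_ne hjs]
      have hdR : ∑ j ∈ R, d j = ∑ j ∈ R, e j :=
        Finset.sum_congr rfl fun j hj => hdj j (hRmem j hj).2 (hRmem j hj).1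
      have hdsum : d s + d t + ∑ j ∈ R, d j = Stot := by
        rw [← sum_split3 s t hst d]
        exact hdS'.2
      have hdst : d s + d t = M' := by omega
      refine ⟨d s, ?_, ?_⟩
      · rw [Finset.mem_Icc]
        have h1 := hdrng s
        have h2 := hdrng t
        omega
      · funext j
        by_cases hjt : j = t
        · rw [hjt, hupdt]
          have h1 := hdrng s
          omega
        by_cases hjs : j = s
        · rw [hjs, hupds]
        · rw [hupdj _ j hjs hjt, hdj j hjs hjt]
    · rintro ⟨i, hi, rfl⟩
      rw [Finset.mem_Icc] at hi
      have hupd_rng : ∀ j, upd i j ≤ N := by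
        intro j
        by_cases hjt : j = t
        · rw [hjt, hupdt]; omega
        by_cases hjs : j = s
        · rw [hjs, hupds]; exact hi.2
        · rw [hupdj _ j hjs hjt]; exact heN j
      have hupd_sum : ∑ j, upd i j = Stot := by
        rw [sum_split3 s t hst (upd i), hupds, hupdt]
        have hRsame : ∑ j ∈ R, upd i j = ∑ j ∈ R, e j :=
          Finset.sum_congr rfl fun j hj => hupdj _ j (hRmem j hj).2 (hRmem j hj).1
        rw [hRsame]
        omega
      constructor
      · rw [hSdef, Finset.mem_filter, Fintype.mem_piFinset]
        exact ⟨fun j => Finset.mem_range.mpr (by have := hupd_rng j; omega), hupd_sum⟩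
      · funext j
        by_cases hjt : j = t
        · rw [hjt, hπ]
          simp only []
          rw [Function.update_self, het]
        by_cases hjs : j = s
        · rw [hjs, hπ]
          simp only []
          rw [Function.update_of_ne hst, Function.update_self, hes]
        · rw [hπ]
          simp only []
          rw [Function.update_of_ne hjt, Function.update_of_ne hjs, hupdj _ j hjs hjt]
  rw [hfiber, Finset.sum_image (fun a _ b _ hab => by
    have := congrFun hab s
    rwa [hupds, hupds] at this)]
  -- now compute each term
  set me : MvPolynomial (Fin n) F := ∏ j ∈ R, X j ^ (e j * (q - 1)) with hme
  have hterm : ∀ i ∈ Finset.Icc κ N,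
      actM (Matrix.transvection s t c) (∏ j, (X j : MvPolynomial (Fin n) F) ^ (upd i j * (q - 1)))
        - ∏ j, (X j : MvPolynomial (Fin n) F) ^ (upd i j * (q - 1))
      = ((X s + C c * X t) ^ (i * (q - 1)) * (X t : MvPolynomial (Fin n) F) ^ ((N + κ - i) * (q - 1))
          - X s ^ (i * (q - 1)) * X t ^ ((N + κ - i) * (q - 1))) * me := by
    intro i _
    rw [hact (upd i)]
    rw [prod_split3 s t hst (fun j => (if j = s then X s + C c * X t else X j) ^ (upd i j * (q - 1)))]
    rw [prod_split3 s t hst (fun j => (X j : MvPolynomial (Fin n) F) ^ (upd i j * (q - 1)))]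
    rw [if_pos rfl, if_neg hst.symm, hupds, hupdt]
    have hrest1 : ∏ j ∈ R, (if j = s then X s + C c * X t else (X j : MvPolynomial (Fin n) F)) ^ (upd i j * (q - 1)) = me := by
      rw [hme]
      apply Finset.prod_congr rfl
      intro j hj
      rw [if_neg (hRmem j hj).2, hupdj _ j (hRmem j hj).2 (hRmem j hj).1]
    have hrest2 : ∏ j ∈ R, (X j : MvPolynomial (Fin n) F) ^ (upd i j * (q - 1)) = me := by
      rw [hme]
      apply Finset.prod_congr rfl
      intro j hj
      rw [hupdj _ j (hRmem j hj).2 (hRmem j hj).1]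
    rw [hrest1, hrest2, sub_mul]
  rw [Finset.sum_congr rfl hterm, ← Finset.sum_mul]
  exact Ideal.mul_mem_right me _ (key2 q hq m hm s t hst c κ hκN)

/-- for `0 ≤ k' ≤ N = (q^m-q)/(q-1)`, the element `a_{m,n,k'}` of
`Q = F_q[x_1,…,x_n]/(x_1^{q^m},…,x_n^{q^m})` is `GL_n(F_q)`-invariant. -/
theorem statement11 (F : Type) [Field F] [Fintype F] (q : ℕ) (hq : Fintype.card F = q)
    (n : ℕ) (hn : 1 ≤ n) (m : ℕ) (hm : 1 ≤ m)
    (k' : ℕ) (hk' : k' ≤ (q ^ m - q) / (q - 1)) (g : GL (Fin n) F) :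
    Ideal.Quotient.mk (frobIdeal F n (q ^ m)) (glAct F n g (aInv F n q m k'))
      = Ideal.Quotient.mk (frobIdeal F n (q ^ m)) (aInv F n q m k') := by
  have hdet : (↑g : Matrix (Fin n) (Fin n) F).det ≠ 0 :=
    ((Matrix.isUnit_iff_isUnit_det _).mp g.isUnit).ne_zero
  have hgl : glAct F n g = actM (↑g : Matrix (Fin n) (Fin n) F) := rfl
  rw [hgl]
  refine Matrix.diagonal_transvection_induction_of_det_ne_zero
    (fun M => Ideal.Quotient.mk (frobIdeal F n (q ^ m)) (actM M (aInv F n q m k'))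
      = Ideal.Quotient.mk (frobIdeal F n (q ^ m)) (aInv F n q m k'))
    (↑g) hdet ?_ ?_ ?_
  · intro D hD
    have hDd : ∀ i, D i ≠ 0 := by
      rw [Matrix.det_diagonal] at hD
      exact fun i => Finset.prod_ne_zero_iff.mp hD i (Finset.mem_univ i)
    rw [actM_diag q hq m k' D hDd]
  · intro ts
    rcases ts with ⟨ti, tj, hij, tc⟩
    rw [Matrix.TransvectionStruct.toMatrix_mk]
    rw [Ideal.Quotient.eq]
    exact transvec_aInv q hq m hm k' ti tj hij tc
  · intro A B _ _ hA hB
    have hcomp : actM (A * B) (aInv F n q m k') = actM B (actM A (aInv F n q m k')) :=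
      (actM_comp B A _).symm
    have hAmem : actM A (aInv F n q m k') - aInv F n q m k' ∈ frobIdeal F n (q ^ m) :=
      Ideal.Quotient.eq.mp hA
    have hsplit : actM B (actM A (aInv F n q m k')) =
        actM B (aInv F n q m k') + actM B (actM A (aInv F n q m k') - aInv F n q m k') := by
      rw [← map_add]
      congr 1
      ring
    rw [hcomp, hsplit, RingHom.map_add, Ideal.Quotient.eq_zero_iff_mem.mpr
      (actM_mem_frobIdeal q hq m B hAmem), add_zero, hB]


end Main
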